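/- arXiv:2407.14297 — 2 statements merged into one kernel-verified Lean document; each statement's English description precedes it below -/
import Mathlib

section
/- Let D ⋉ δ denote the tangent group SE₂(3) ⋉ se₂(3) with product (D₁, δ₁)(D₂, δ₂) = (D₁D₂, δ₁ + D₁δ₂D₁⁻¹). Define φ : (SE₂(3) ⋉ se₂(3)) × (SE₂(3) × ℝ⁹) → SE₂(3) × ℝ⁹ by φ((D,δ), (T, b)) = (TD, Ad_{D⁻¹}(b^∧ - δ)^∨), where Ad is the adjoint of SE₂(3). Then φ is a transitive right group action. -/
open Matrix

/-- The `se₂(3)` hat map `ℝ⁹ → ℝ^{5×5}`: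
`x = (ω, v, w) ↦ [[ω^∧, v, w],[0,0,0],[0,0,0]]`. -/
def hat9 (x : Fin 9 → ℝ) : Matrix (Fin 5) (Fin 5) ℝ :=
  !![0, -x 2, x 1, x 3, x 6;
     x 2, 0, -x 0, x 4, x 7;
     -x 1, x 0, 0, x 5, x 8;
     0, 0, 0, 0, 0;
     0, 0, 0, 0, 0]

/-- The `se₂(3)` vee map, inverse of `hat9` on `se₂(3)`. -/
def vee9 (m : Matrix (Fin 5) (Fin 5) ℝ) : Fin 9 → ℝ :=
  ![m 2 1, m 0 2, m 1 0, m 0 3, m 1 3, m 2 3, m 0 4, m 1 4, m 2 4]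

/-- Membership in `SE₂(3)`: 5×5 matrices `[[A,a,b],[0,1,0],[0,0,1]]` with `A ∈ SO(3)`. -/
def SE23 (M : Matrix (Fin 5) (Fin 5) ℝ) : Prop :=
  ∃ (A : Matrix (Fin 3) (Fin 3) ℝ) (a b : Fin 3 → ℝ),
    A * Aᵀ = 1 ∧ Aᵀ * A = 1 ∧ A.det = 1 ∧
    M = !![A 0 0, A 0 1, A 0 2, a 0, b 0;
           A 1 0, A 1 1, A 1 2, a 1, b 1;
           A 2 0, A 2 1, A 2 2, a 2, b 2;
           0, 0, 0, 1, 0;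
           0, 0, 0, 0, 1]

/-- Membership in the Lie algebra `se₂(3)` (image of the hat map). -/
def se23 (m : Matrix (Fin 5) (Fin 5) ℝ) : Prop := ∃ x : Fin 9 → ℝ, m = hat9 x

/-- Product of the tangent group `SE₂(3) ⋉ se₂(3)`:
`(D₁, δ₁)(D₂, δ₂) = (D₁D₂, δ₁ + D₁δ₂D₁⁻¹)`. -/
noncomputable def tgProd (X Y : Matrix (Fin 5) (Fin 5) ℝ × Matrix (Fin 5) (Fin 5) ℝ) :
    Matrix (Fin 5) (Fin 5) ℝ × Matrix (Fin 5) (Fin 5) ℝ :=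
  (X.1 * Y.1, X.2 + X.1 * Y.2 * X.1⁻¹)

/-- The action `φ((D,δ), (T, b)) = (TD, Ad_{D⁻¹}(b^∧ - δ)^∨)` of the tangent group
on `SE₂(3) × ℝ⁹`, where `Ad_{D⁻¹}(u) = D⁻¹ u D`. -/
noncomputable def phiTG (X : Matrix (Fin 5) (Fin 5) ℝ × Matrix (Fin 5) (Fin 5) ℝ)
    (ξ : Matrix (Fin 5) (Fin 5) ℝ × (Fin 9 → ℝ)) :
    Matrix (Fin 5) (Fin 5) ℝ × (Fin 9 → ℝ) :=
  (ξ.1 * X.1, vee9 (X.1⁻¹ * (hat9 ξ.2 - X.2) * X.1))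

/-! ### Auxiliary lemmas -/
/-- Constructor for elements of `SE₂(3)` shape. -/
def mkSE (A : Matrix (Fin 3) (Fin 3) ℝ) (a b : Fin 3 → ℝ) : Matrix (Fin 5) (Fin 5) ℝ :=
  !![A 0 0, A 0 1, A 0 2, a 0, b 0;
     A 1 0, A 1 1, A 1 2, a 1, b 1;
     A 2 0, A 2 1, A 2 2, a 2, b 2;
     0, 0, 0, 1, 0;
     0, 0, 0, 0, 1]

lemma SE23_iff (M : Matrix (Fin 5) (Fin 5) ℝ) :
    SE23 M ↔ ∃ (A : Matrix (Fin 3) (Fin 3) ℝ) (a b : Fin 3 → ℝ),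
      A * Aᵀ = 1 ∧ Aᵀ * A = 1 ∧ A.det = 1 ∧ M = mkSE A a b := Iff.rfl

@[simp] lemma vec9_val_4 (a0 a1 a2 a3 a4 a5 a6 a7 a8 : ℝ) :
    ![a0,a1,a2,a3,a4,a5,a6,a7,a8] (4 : Fin 9) = a4 := rfl
@[simp] lemma vec9_val_5 (a0 a1 a2 a3 a4 a5 a6 a7 a8 : ℝ) :
    ![a0,a1,a2,a3,a4,a5,a6,a7,a8] (5 : Fin 9) = a5 := rfl
@[simp] lemma vec9_val_6 (a0 a1 a2 a3 a4 a5 a6 a7 a8 : ℝ) :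
    ![a0,a1,a2,a3,a4,a5,a6,a7,a8] (6 : Fin 9) = a6 := rfl
@[simp] lemma vec9_val_7 (a0 a1 a2 a3 a4 a5 a6 a7 a8 : ℝ) :
    ![a0,a1,a2,a3,a4,a5,a6,a7,a8] (7 : Fin 9) = a7 := rfl
@[simp] lemma vec9_val_8 (a0 a1 a2 a3 a4 a5 a6 a7 a8 : ℝ) :
    ![a0,a1,a2,a3,a4,a5,a6,a7,a8] (8 : Fin 9) = a8 := rfl

lemma vee9_hat9 (x : Fin 9 → ℝ) : vee9 (hat9 x) = x := by
  funext i; fin_cases i <;> rfl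

lemma hat9_sub (x y : Fin 9 → ℝ) : hat9 x - hat9 y = hat9 (x - y) := by
  ext i j
  fin_cases i <;> fin_cases j <;>
    simp [hat9, vecHead, vecTail, Function.comp] <;> ring

lemma mkSE_one : mkSE 1 0 0 = 1 := by
  ext i j
  fin_cases i <;> fin_cases j <;>
    simp [mkSE, Matrix.one_apply, vecHead, vecTail, Function.comp]

lemma mkSE_mul (A₁ A₂ : Matrix (Fin 3) (Fin 3) ℝ) (a₁ b₁ a₂ b₂ : Fin 3 → ℝ) :
    mkSE A₁ a₁ b₁ * mkSE A₂ a₂ b₂ = mkSE (A₁ * A₂) (A₁ *ᵥ a₂ + a₁) (A₁ *ᵥ b₂ + b₁) := by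
  ext i j
  fin_cases i <;> fin_cases j <;>
    simp [mkSE, mul_apply, Fin.sum_univ_five, Fin.sum_univ_three, mulVec, dotProduct,
      vecHead, vecTail, Function.comp] <;> ring

lemma hat9_mul_mkSE (x : Fin 9 → ℝ) (A : Matrix (Fin 3) (Fin 3) ℝ) (a b : Fin 3 → ℝ) :
    hat9 x * mkSE A a b =
    !![-(x 2) * A 1 0 + x 1 * A 2 0, -(x 2) * A 1 1 + x 1 * A 2 1, -(x 2) * A 1 2 + x 1 * A 2 2,
         -(x 2) * a 1 + x 1 * a 2 + x 3, -(x 2) * b 1 + x 1 * b 2 + x 6;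
       x 2 * A 0 0 - x 0 * A 2 0, x 2 * A 0 1 - x 0 * A 2 1, x 2 * A 0 2 - x 0 * A 2 2,
         x 2 * a 0 - x 0 * a 2 + x 4, x 2 * b 0 - x 0 * b 2 + x 7;
       -(x 1) * A 0 0 + x 0 * A 1 0, -(x 1) * A 0 1 + x 0 * A 1 1, -(x 1) * A 0 2 + x 0 * A 1 2,
         -(x 1) * a 0 + x 0 * a 1 + x 5, -(x 1) * b 0 + x 0 * b 1 + x 8;
       0, 0, 0, 0, 0;
       0, 0, 0, 0, 0] := by
  ext i j
  fin_cases i <;> fin_cases j <;>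
    simp [hat9, mkSE, mul_apply, Fin.sum_univ_five, vecHead, vecTail, Function.comp] <;> ring

set_option maxHeartbeats 1000000 in
lemma conj_eq (A : Matrix (Fin 3) (Fin 3) ℝ) (a b c d : Fin 3 → ℝ) (x : Fin 9 → ℝ) :
    mkSE Aᵀ c d * hat9 x * mkSE A a b = hat9
      ![x 0 * (A 2 2 * A 1 1 - A 1 2 * A 2 1) + x 1 * (A 0 2 * A 2 1 - A 2 2 * A 0 1)
          + x 2 * (A 1 2 * A 0 1 - A 0 2 * A 1 1),
        x 0 * (A 2 0 * A 1 2 - A 1 0 * A 2 2) + x 1 * (A 0 0 * A 2 2 - A 2 0 * A 0 2)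
          + x 2 * (A 1 0 * A 0 2 - A 0 0 * A 1 2),
        x 0 * (A 2 1 * A 1 0 - A 1 1 * A 2 0) + x 1 * (A 0 1 * A 2 0 - A 2 1 * A 0 0)
          + x 2 * (A 1 1 * A 0 0 - A 0 1 * A 1 0),
        A 0 0 * (-(x 2) * a 1 + x 1 * a 2 + x 3) + A 1 0 * (x 2 * a 0 - x 0 * a 2 + x 4)
          + A 2 0 * (-(x 1) * a 0 + x 0 * a 1 + x 5),
        A 0 1 * (-(x 2) * a 1 + x 1 * a 2 + x 3) + A 1 1 * (x 2 * a 0 - x 0 * a 2 + x 4)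
          + A 2 1 * (-(x 1) * a 0 + x 0 * a 1 + x 5),
        A 0 2 * (-(x 2) * a 1 + x 1 * a 2 + x 3) + A 1 2 * (x 2 * a 0 - x 0 * a 2 + x 4)
          + A 2 2 * (-(x 1) * a 0 + x 0 * a 1 + x 5),
        A 0 0 * (-(x 2) * b 1 + x 1 * b 2 + x 6) + A 1 0 * (x 2 * b 0 - x 0 * b 2 + x 7)
          + A 2 0 * (-(x 1) * b 0 + x 0 * b 1 + x 8),
        A 0 1 * (-(x 2) * b 1 + x 1 * b 2 + x 6) + A 1 1 * (x 2 * b 0 - x 0 * b 2 + x 7)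
          + A 2 1 * (-(x 1) * b 0 + x 0 * b 1 + x 8),
        A 0 2 * (-(x 2) * b 1 + x 1 * b 2 + x 6) + A 1 2 * (x 2 * b 0 - x 0 * b 2 + x 7)
          + A 2 2 * (-(x 1) * b 0 + x 0 * b 1 + x 8)] := by
  rw [mul_assoc, hat9_mul_mkSE]
  ext i j
  fin_cases i <;> fin_cases j <;>
    simp [hat9, mkSE, mul_apply, Fin.sum_univ_five, transpose_apply,
      vecHead, vecTail, Function.comp] <;> ring

lemma se23_conj (A : Matrix (Fin 3) (Fin 3) ℝ) (a b c d : Fin 3 → ℝ) (x : Fin 9 → ℝ) :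
    se23 (mkSE Aᵀ c d * hat9 x * mkSE A a b) := ⟨_, conj_eq A a b c d x⟩

set_option maxRecDepth 4000 in
/-- All the facts we need about an `SE₂(3)` element: explicit form, explicit inverse,
and invertibility. -/
lemma SE23_facts {D : Matrix (Fin 5) (Fin 5) ℝ} (h : SE23 D) :
    ∃ (A : Matrix (Fin 3) (Fin 3) ℝ) (a b : Fin 3 → ℝ),
      A * Aᵀ = 1 ∧ Aᵀ * A = 1 ∧ A.det = 1 ∧ D = mkSE A a b ∧
      D⁻¹ = mkSE Aᵀ (-(Aᵀ *ᵥ a)) (-(Aᵀ *ᵥ b)) ∧ D⁻¹ * D = 1 ∧ D * D⁻¹ = 1 := by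
  obtain ⟨A, a, b, h1, h2, h3, rfl⟩ := h
  have hDW : mkSE A a b * mkSE Aᵀ (-(Aᵀ *ᵥ a)) (-(Aᵀ *ᵥ b)) = 1 := by
    rw [mkSE_mul, h1]
    have ha : A *ᵥ -(Aᵀ *ᵥ a) + a = 0 := by
      rw [Matrix.mulVec_neg, mulVec_mulVec, h1, one_mulVec, neg_add_cancel]
    have hb : A *ᵥ -(Aᵀ *ᵥ b) + b = 0 := by
      rw [Matrix.mulVec_neg, mulVec_mulVec, h1, one_mulVec, neg_add_cancel]
    rw [ha, hb, mkSE_one]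
  have hWD : mkSE Aᵀ (-(Aᵀ *ᵥ a)) (-(Aᵀ *ᵥ b)) * mkSE A a b = 1 := by
    rw [mkSE_mul, h2]
    have ha : Aᵀ *ᵥ a + -(Aᵀ *ᵥ a) = 0 := add_neg_cancel _
    have hb : Aᵀ *ᵥ b + -(Aᵀ *ᵥ b) = 0 := add_neg_cancel _
    rw [ha, hb, mkSE_one]
  have hinv : (mkSE A a b)⁻¹ = mkSE Aᵀ (-(Aᵀ *ᵥ a)) (-(Aᵀ *ᵥ b)) :=
    Matrix.inv_eq_left_inv hWD
  refine ⟨A, a, b, h1, h2, h3, rfl, hinv, ?_, ?_⟩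
  · show (mkSE A a b)⁻¹ * mkSE A a b = 1
    rw [hinv]; exact hWD
  · show mkSE A a b * (mkSE A a b)⁻¹ = 1
    rw [hinv]; exact hDW

lemma ring_help {R : Type*} [Ring R] (x2 y2 m yi y x xi : R) (h : yi * y = 1) :
    xi * yi * (m - (y2 + y * x2 * yi)) * (y * x) = xi * (yi * (m - y2) * y - x2) * x := by
  have key : xi * yi * (m - (y2 + y * x2 * yi)) * (y * x)
      = xi * (yi * (m - y2) * y - (yi * y) * x2 * (yi * y)) * x := by noncomm_ring
  rw [key, h, one_mul, mul_one]

lemma se23_hatvee {m : Matrix (Fin 5) (Fin 5) ℝ} (h : se23 m) : hat9 (vee9 m) = m := by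
  obtain ⟨x, rfl⟩ := h; rw [vee9_hat9]

/-- `Ad_{D⁻¹}` preserves `se₂(3)`. -/
lemma se23_ad_inv {D m : Matrix (Fin 5) (Fin 5) ℝ} (hD : SE23 D) (hm : se23 m) :
    se23 (D⁻¹ * m * D) := by
  obtain ⟨A, a, b, h1, h2, h3, hDe, hinv, _, _⟩ := SE23_facts hD
  obtain ⟨x, rfl⟩ := hm
  rw [hinv, hDe]
  exact se23_conj A a b _ _ x

/-- `Ad_D` preserves `se₂(3)`. -/
lemma se23_ad {D m : Matrix (Fin 5) (Fin 5) ℝ} (hD : SE23 D) (hm : se23 m) :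
    se23 (D * m * D⁻¹) := by
  obtain ⟨A, a, b, h1, h2, h3, hDe, hinv, _, _⟩ := SE23_facts hD
  obtain ⟨x, rfl⟩ := hm
  rw [hinv, hDe]
  have : mkSE A a b = mkSE Aᵀᵀ a b := by rw [transpose_transpose]
  rw [this]
  exact se23_conj Aᵀ _ _ a b x

lemma SE23_mkSE {A : Matrix (Fin 3) (Fin 3) ℝ} (a b : Fin 3 → ℝ)
    (h1 : A * Aᵀ = 1) (h2 : Aᵀ * A = 1) (h3 : A.det = 1) : SE23 (mkSE A a b) :=
  ⟨A, a, b, h1, h2, h3, rfl⟩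

lemma SE23_mul {M N : Matrix (Fin 5) (Fin 5) ℝ} (hM : SE23 M) (hN : SE23 N) :
    SE23 (M * N) := by
  obtain ⟨A₁, a₁, b₁, h1, h2, h3, rfl⟩ := hM
  obtain ⟨A₂, a₂, b₂, g1, g2, g3, rfl⟩ := hN
  show SE23 (mkSE A₁ a₁ b₁ * mkSE A₂ a₂ b₂)
  rw [mkSE_mul]
  refine SE23_mkSE _ _ ?_ ?_ ?_
  · rw [transpose_mul, mul_assoc, ← mul_assoc A₂, g1, one_mul, h1]
  · rw [transpose_mul, mul_assoc, ← mul_assoc A₁ᵀ, h2, one_mul, g2]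
  · rw [det_mul, h3, g3, one_mul]

lemma SE23_inv {D : Matrix (Fin 5) (Fin 5) ℝ} (hD : SE23 D) : SE23 D⁻¹ := by
  obtain ⟨A, a, b, h1, h2, h3, _, hinv, _, _⟩ := SE23_facts hD
  rw [hinv]
  exact SE23_mkSE _ _ (by rw [transpose_transpose, h2]) (by rw [transpose_transpose, h1])
    (by rw [det_transpose, h3])

/-- `φ((D,δ), (T, b)) = (TD, Ad_{D⁻¹}(b^∧ - δ)^∨)` is a transitive
right group action of the tangent group `SE₂(3) ⋉ se₂(3)` on `SE₂(3) × ℝ⁹`. -/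
theorem tangent_group_action_transitive :
    -- identity law
    (∀ ξ : Matrix (Fin 5) (Fin 5) ℝ × (Fin 9 → ℝ), phiTG (1, 0) ξ = ξ) ∧
    -- right action law: φ(X, φ(Y, ξ)) = φ(Y·X, ξ)
    (∀ X Y : Matrix (Fin 5) (Fin 5) ℝ × Matrix (Fin 5) (Fin 5) ℝ,
      SE23 X.1 → se23 X.2 → SE23 Y.1 → se23 Y.2 →
      ∀ ξ : Matrix (Fin 5) (Fin 5) ℝ × (Fin 9 → ℝ),
        phiTG X (phiTG Y ξ) = phiTG (tgProd Y X) ξ) ∧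
    -- transitivity
    (∀ T₁ T₂ : Matrix (Fin 5) (Fin 5) ℝ, ∀ b₁ b₂ : Fin 9 → ℝ,
      SE23 T₁ → SE23 T₂ →
      ∃ D δ : Matrix (Fin 5) (Fin 5) ℝ, SE23 D ∧ se23 δ ∧
        phiTG (D, δ) (T₁, b₁) = (T₂, b₂)) := by
  refine ⟨?_, ?_, ?_⟩
  · -- identity
    intro ξ
    simp [phiTG, vee9_hat9]
  · -- action law
    intro X Y hX1 hX2 hY1 hY2 ξ
    obtain ⟨A, a, b, _, _, _, hYe, hYinv, hYi, hYi'⟩ := SE23_facts hY1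
    unfold phiTG tgProd
    dsimp only
    refine Prod.ext ?_ ?_
    · show ξ.1 * Y.1 * X.1 = ξ.1 * (Y.1 * X.1)
      exact mul_assoc ξ.1 Y.1 X.1
    · -- second components
      obtain ⟨y, hy⟩ := hY2
      have hM : se23 (hat9 ξ.2 - Y.2) := ⟨ξ.2 - y, by rw [hy, hat9_sub]⟩
      have hN : se23 (Y.1⁻¹ * (hat9 ξ.2 - Y.2) * Y.1) := se23_ad_inv hY1 hM
      have hNrw := se23_hatvee hN
      show vee9 (X.1⁻¹ * (hat9 (vee9 (Y.1⁻¹ * (hat9 ξ.2 - Y.2) * Y.1)) - X.2) * X.1)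
         = vee9 ((Y.1 * X.1)⁻¹ * (hat9 ξ.2 - (Y.2 + Y.1 * X.2 * Y.1⁻¹)) * (Y.1 * X.1))
      rw [hNrw, Matrix.mul_inv_rev]
      exact (congrArg vee9 (ring_help X.2 Y.2 (hat9 ξ.2) Y.1⁻¹ Y.1 X.1 X.1⁻¹ hYi)).symm
  · -- transitivity
    intro T₁ T₂ b₁ b₂ h₁ h₂
    obtain ⟨_, _, _, _, _, _, _, _, hT₁i, hT₁i'⟩ := SE23_facts h₁
    obtain ⟨D, hD⟩ : ∃ D, D = T₁⁻¹ * T₂ := ⟨_, rfl⟩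
    have hDse : SE23 D := hD ▸ SE23_mul (SE23_inv h₁) h₂
    obtain ⟨_, _, _, _, _, _, _, _, hDi, hDi'⟩ := SE23_facts hDse
    have hAd : se23 (D * hat9 b₂ * D⁻¹) := se23_ad hDse ⟨b₂, rfl⟩
    obtain ⟨z, hz⟩ := hAd
    refine ⟨D, hat9 b₁ - D * hat9 b₂ * D⁻¹, hDse, ⟨b₁ - z, by rw [hz, hat9_sub]⟩, ?_⟩
    unfold phiTG
    dsimp only
    refine Prod.ext ?_ ?_
    · show T₁ * D = T₂
      rw [hD, ← mul_assoc, hT₁i', one_mul]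
    · show vee9 (D⁻¹ * (hat9 b₁ - (hat9 b₁ - D * hat9 b₂ * D⁻¹)) * D) = b₂
      rw [sub_sub_cancel]
      have : D⁻¹ * (D * hat9 b₂ * D⁻¹) * D = hat9 b₂ := by
        rw [show D⁻¹ * (D * hat9 b₂ * D⁻¹) * D = D⁻¹ * D * hat9 b₂ * (D⁻¹ * D) by
          noncomm_ring, hDi, one_mul, mul_one]
      rw [this, vee9_hat9]
end

section
/- The INS lift is invariant under gravity-preserving frame changes: with Λ₁(T, b, u) = (W - B + N) + T⁻¹(G - N)T where G = [[0₃ₓ₃, g e₃, 0],[0,0,0],[0,0,0]] and N the matrix with single 1 in entry (4,5), and H = [[R_H, 0, p_H],[0,1,0],[0,0,1]] ∈ SE₂(3) with R_H e₃-axial rotation (R_H e₃ = e₃), one has Λ₁(H⁻¹T, b, u) = Λ₁(T, b, u); the key identity is H(G - N)H⁻¹ = G - N. -/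
open Matrix

/-- The matrix `N`, with a single 1 in entry (4,5). -/
def Nmat : Matrix (Fin 5) (Fin 5) ℝ :=
  !![0, 0, 0, 0, 0;
     0, 0, 0, 0, 0;
     0, 0, 0, 0, 0;
     0, 0, 0, 0, 1;
     0, 0, 0, 0, 0]

/-- The gravity matrix `G = [[0₃ₓ₃, g e₃, 0],[0,0,0],[0,0,0]]` for gravity magnitude `g`. -/
def Gmat (g : ℝ) : Matrix (Fin 5) (Fin 5) ℝ :=
  hat9 ![0, 0, 0, 0, 0, g, 0, 0, 0]

/-- `Λ₁(T, b, u) = (W - B + N) + T⁻¹(G - N)T`, with `W = w^∧`, `B = b^∧`. -/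
noncomputable def Lam1 (g : ℝ) (T : Matrix (Fin 5) (Fin 5) ℝ) (b w : Fin 9 → ℝ) :
    Matrix (Fin 5) (Fin 5) ℝ :=
  (hat9 w - hat9 b + Nmat) + T⁻¹ * (Gmat g - Nmat) * T

set_option maxHeartbeats 2000000 in
/-- The INS lift is invariant under gravity-preserving frame changes:
for `H = [[R_H, 0, p_H],[0,1,0],[0,0,1]] ∈ SE₂(3)` with `R_H ∈ SO(3)` satisfying
`R_H e₃ = e₃`, one has `H(G - N)H⁻¹ = G - N` and `Λ₁(H⁻¹T, b, u) = Λ₁(T, b, u)`. -/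
theorem lift_gravity_frame_invariant
    (g : ℝ) (R : Matrix (Fin 3) (Fin 3) ℝ)
    (hR : R * Rᵀ = 1) (hdet : R.det = 1)
    (hax : R.mulVec ![0, 0, 1] = ![0, 0, 1]) (p : Fin 3 → ℝ)
    (T : Matrix (Fin 5) (Fin 5) ℝ) (hT : SE23 T) (b w : Fin 9 → ℝ) :
    (!![R 0 0, R 0 1, R 0 2, 0, p 0;
        R 1 0, R 1 1, R 1 2, 0, p 1;
        R 2 0, R 2 1, R 2 2, 0, p 2;
        0, 0, 0, 1, 0;
        0, 0, 0, 0, 1] * (Gmat g - Nmat) *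
      (!![R 0 0, R 0 1, R 0 2, 0, p 0;
          R 1 0, R 1 1, R 1 2, 0, p 1;
          R 2 0, R 2 1, R 2 2, 0, p 2;
          0, 0, 0, 1, 0;
          0, 0, 0, 0, 1])⁻¹ = Gmat g - Nmat) ∧
    Lam1 g ((!![R 0 0, R 0 1, R 0 2, 0, p 0;
                R 1 0, R 1 1, R 1 2, 0, p 1;
                R 2 0, R 2 1, R 2 2, 0, p 2;
                0, 0, 0, 1, 0;
                0, 0, 0, 0, 1])⁻¹ * T) b w = Lam1 g T b w := by
  have h02 : R 0 2 = 0 := by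
    have := congrFun hax 0; simpa [Matrix.mulVec, dotProduct, Fin.sum_univ_three] using this
  have h12 : R 1 2 = 0 := by
    have := congrFun hax 1; simpa [Matrix.mulVec, dotProduct, Fin.sum_univ_three] using this
  have h22 : R 2 2 = 1 := by
    have := congrFun hax 2; simpa [Matrix.mulVec, dotProduct, Fin.sum_univ_three] using this
  have hRe : ∀ i j : Fin 3, R i 0 * R j 0 + R i 1 * R j 1 + R i 2 * R j 2 = if i = j then 1 else 0 := by
    intro i j
    have := congrFun (congrFun hR i) j
    simpa [Matrix.mul_apply, Fin.sum_univ_three, Matrix.one_apply] using this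
  have e00 : R 0 0 * R 0 0 + R 0 1 * R 0 1 + R 0 2 * R 0 2 = 1 := by simpa using hRe 0 0
  have e11 : R 1 0 * R 1 0 + R 1 1 * R 1 1 + R 1 2 * R 1 2 = 1 := by simpa using hRe 1 1
  have e22 : R 2 0 * R 2 0 + R 2 1 * R 2 1 + R 2 2 * R 2 2 = 1 := by simpa using hRe 2 2
  have e01 : R 0 0 * R 1 0 + R 0 1 * R 1 1 + R 0 2 * R 1 2 = 0 := by simpa using hRe 0 1
  have e02 : R 0 0 * R 2 0 + R 0 1 * R 2 1 + R 0 2 * R 2 2 = 0 := by simpa using hRe 0 2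
  have e12 : R 1 0 * R 2 0 + R 1 1 * R 2 1 + R 1 2 * R 2 2 = 0 := by simpa using hRe 1 2
  have e10 : R 1 0 * R 0 0 + R 1 1 * R 0 1 + R 1 2 * R 0 2 = 0 := by simpa using hRe 1 0
  have e20 : R 2 0 * R 0 0 + R 2 1 * R 0 1 + R 2 2 * R 0 2 = 0 := by simpa using hRe 2 0
  have e21 : R 2 0 * R 1 0 + R 2 1 * R 1 1 + R 2 2 * R 1 2 = 0 := by simpa using hRe 2 1
  have hHH' :
      (!![R 0 0, R 0 1, R 0 2, 0, p 0;
          R 1 0, R 1 1, R 1 2, 0, p 1;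
          R 2 0, R 2 1, R 2 2, 0, p 2;
          0, 0, 0, 1, 0;
          0, 0, 0, 0, 1] : Matrix (Fin 5) (Fin 5) ℝ) *
       !![R 0 0, R 1 0, R 2 0, 0, -(R 0 0 * p 0 + R 1 0 * p 1 + R 2 0 * p 2);
          R 0 1, R 1 1, R 2 1, 0, -(R 0 1 * p 0 + R 1 1 * p 1 + R 2 1 * p 2);
          R 0 2, R 1 2, R 2 2, 0, -(R 0 2 * p 0 + R 1 2 * p 1 + R 2 2 * p 2);
          0, 0, 0, 1, 0;
          0, 0, 0, 0, 1] = 1 := by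
    ext i j
    fin_cases i <;> fin_cases j <;>
      simp [Matrix.mul_apply, Fin.sum_univ_five, Matrix.one_apply,
        Matrix.vecHead, Matrix.vecTail, Function.comp] <;>
      first
        | linear_combination e00 | linear_combination e01 | linear_combination e02
        | linear_combination e10 | linear_combination e11 | linear_combination e12
        | linear_combination e20 | linear_combination e21 | linear_combination e22
        | linear_combination (-(p 0))*e00 - p 1*e01 - p 2*e02
        | linear_combination (-(p 0))*e10 - p 1*e11 - p 2*e12
        | linear_combination (-(p 0))*e20 - p 1*e21 - p 2*e22
  have hGN : Gmat g - Nmat =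
      !![0,0,0,0,0; 0,0,0,0,0; 0,0,0,g,0; 0,0,0,0,-1; 0,0,0,0,0] := by
    ext i j
    fin_cases i <;> fin_cases j <;>
      simp [Gmat, Nmat, hat9, Matrix.sub_apply, Matrix.vecHead, Matrix.vecTail,
        Function.comp, Matrix.cons_val_succ] <;> rfl
  have hHG :
      (!![R 0 0, R 0 1, R 0 2, 0, p 0;
          R 1 0, R 1 1, R 1 2, 0, p 1;
          R 2 0, R 2 1, R 2 2, 0, p 2;
          0, 0, 0, 1, 0;
          0, 0, 0, 0, 1] : Matrix (Fin 5) (Fin 5) ℝ) * (Gmat g - Nmat) = Gmat g - Nmat := by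
    rw [hGN]
    ext i j
    fin_cases i <;> fin_cases j <;>
      simp [Matrix.mul_apply, Fin.sum_univ_five, h02, h12, h22, Matrix.vecHead, Matrix.vecTail, Function.comp]
  have hGH :
      (Gmat g - Nmat) * !![R 0 0, R 0 1, R 0 2, 0, p 0;
          R 1 0, R 1 1, R 1 2, 0, p 1;
          R 2 0, R 2 1, R 2 2, 0, p 2;
          0, 0, 0, 1, 0;
          0, 0, 0, 0, 1] = Gmat g - Nmat := by
    rw [hGN]
    ext i j
    fin_cases i <;> fin_cases j <;>
      simp [Matrix.mul_apply, Fin.sum_univ_five, Matrix.vecHead, Matrix.vecTail, Function.comp]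
  set H : Matrix (Fin 5) (Fin 5) ℝ :=
    !![R 0 0, R 0 1, R 0 2, 0, p 0;
       R 1 0, R 1 1, R 1 2, 0, p 1;
       R 2 0, R 2 1, R 2 2, 0, p 2;
       0, 0, 0, 1, 0;
       0, 0, 0, 0, 1] with hHdef
  have hu : IsUnit H.det := Matrix.isUnit_det_of_right_inverse hHH'
  have hmul : H * H⁻¹ = 1 := Matrix.mul_nonsing_inv _ hu
  have part1 : H * (Gmat g - Nmat) * H⁻¹ = Gmat g - Nmat := by
    calc H * (Gmat g - Nmat) * H⁻¹ = (Gmat g - Nmat) * H * H⁻¹ := by rw [hHG, hGH]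
      _ = Gmat g - Nmat := by rw [mul_assoc, hmul, mul_one]
  refine ⟨part1, ?_⟩
  unfold Lam1
  congr 1
  rw [Matrix.mul_inv_rev, Matrix.nonsing_inv_nonsing_inv _ hu]
  have key' : H * ((Gmat g - Nmat) * (H⁻¹ * T)) = (Gmat g - Nmat) * T := by
    calc H * ((Gmat g - Nmat) * (H⁻¹ * T)) = H * (Gmat g - Nmat) * H⁻¹ * T := by
          simp only [mul_assoc]
      _ = (Gmat g - Nmat) * T := by rw [part1]
  simp only [mul_assoc]
  rw [key']
end
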